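/- Let G be a Lie group with left-invariant pseudo-Riemannian metric γ, (Y_i) a basis of left-invariant vector fields with dual left-invariant 1-forms (ω^i), and on M = G×G set ω = γ_{ij} π₁*ω^i ∧ π₂*ω^j where γ_{ij} = γ(Y_i,Y_j) are constants. Then dω = 0 if and only if G is abelian (i.e. all structure constants c^i_{jk} vanish). -/
import Mathlib


/-!
Statement 10: Let `G` be a Lie group with left-invariant pseudo-Riemannian metric `γ`
and `ω = γ_{ij} π₁*ω^i ∧ π₂*ω^j` on `M = G × G`.  Then `dω = 0` iff `G` is abelian.

At the Lie-algebra level (left-invariant objects): `γ` is a nondegenerate symmetric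
bilinear form on `𝔤`, the 2-form `ω` on `𝔤 × 𝔤` is `ω(A,B) = γ(A₁,B₂) - γ(B₁,A₂)`,
and the exterior differential of the left-invariant 2-form `ω` is the
Chevalley–Eilenberg differential
`dω(U,V,W) = -ω([U,V],W) + ω([U,W],V) - ω([V,W],U)`
(with the componentwise bracket on `𝔤 × 𝔤`), since the coefficients `γ_{ij}` are
constant.  Abelian means all structure constants vanish, i.e. the bracket is zero.
-/

/-- The left-invariant 2-form `ω = γ_{ij} π₁*ω^i ∧ π₂*ω^j` on `G × G`, evaluated on
left-invariant vector fields. -/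
def wGG {g : Type*} [LieRing g] [LieAlgebra ℝ g]
    (γ : g →ₗ[ℝ] g →ₗ[ℝ] ℝ) (A B : g × g) : ℝ :=
  γ A.1 B.2 - γ B.1 A.2

/-- The exterior (Chevalley–Eilenberg) differential of `ω` on left-invariant fields. -/
def dwGG {g : Type*} [LieRing g] [LieAlgebra ℝ g]
    (γ : g →ₗ[ℝ] g →ₗ[ℝ] ℝ) (U V W : g × g) : ℝ :=
  - wGG γ (⁅U.1, V.1⁆, ⁅U.2, V.2⁆) W
  + wGG γ (⁅U.1, W.1⁆, ⁅U.2, W.2⁆) V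
  - wGG γ (⁅V.1, W.1⁆, ⁅V.2, W.2⁆) U

theorem dOmega_zero_iff_abelian {g : Type*} [LieRing g] [LieAlgebra ℝ g]
    (γ : g →ₗ[ℝ] g →ₗ[ℝ] ℝ)
    (hsym : ∀ a b : g, γ a b = γ b a)
    (hnd : ∀ a : g, (∀ b : g, γ a b = 0) → a = 0) :
    (∀ U V W : g × g, dwGG γ U V W = 0) ↔ (∀ u v : g, ⁅u, v⁆ = (0 : g)) := by
  constructor
  · intro h u v
    apply hnd
    intro w
    have := h (u, 0) (v, 0) (0, w)
    simp [dwGG, wGG] at this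
    linarith [this]
  · intro h U V W
    simp [dwGG, wGG, h]
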